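/- Let δ > 0 be real, P_δ := [0,2π) × [-δ,δ], and w(t,r) := (cos t + r·cos(t/2), sin t + r·sin(t/2), r·sin(t/2)). Define f(x,y) := y − 2(x+1)y/((x+1)² + y²), g(x,y) := (x² + y² − 1)²/((x+1)² + y²), and S_δ := { (x,y) ∈ ℝ² \ {(−1,0)} : g(x,y) ≤ δ² }. Then the image w(P_δ) equals the topological closure in ℝ³ of the graph G(f) := { (x, y, f(x,y)) : (x,y) ∈ S_δ }. -/

import Mathlib

open Real Set

lemma mobius_key (t r : ℝ) (hR : 2 * Real.cos (t / 2) + r ≠ 0) :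
    ((Real.cos t + r * Real.cos (t / 2), Real.sin t + r * Real.sin (t / 2)) : ℝ × ℝ) ≠ (-1, 0) ∧
    ((Real.cos t + r * Real.cos (t / 2)) ^ 2 + (Real.sin t + r * Real.sin (t / 2)) ^ 2 - 1) ^ 2 /
      (((Real.cos t + r * Real.cos (t / 2)) + 1) ^ 2 + (Real.sin t + r * Real.sin (t / 2)) ^ 2) = r ^ 2 ∧
    (Real.sin t + r * Real.sin (t / 2)) -
      2 * ((Real.cos t + r * Real.cos (t / 2)) + 1) * (Real.sin t + r * Real.sin (t / 2)) /
      (((Real.cos t + r * Real.cos (t / 2)) + 1) ^ 2 + (Real.sin t + r * Real.sin (t / 2)) ^ 2)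
      = r * Real.sin (t / 2) := by
  set c := Real.cos (t / 2) with hc
  set s := Real.sin (t / 2) with hs
  have pyth : s ^ 2 + c ^ 2 = 1 := Real.sin_sq_add_cos_sq _
  have hct : Real.cos t = 2 * c ^ 2 - 1 := by
    have h := Real.cos_two_mul (t / 2)
    rw [show 2 * (t / 2) = t by ring] at h
    rw [h, hc]
  have hst : Real.sin t = 2 * s * c := by
    have h := Real.sin_two_mul (t / 2)
    rw [show 2 * (t / 2) = t by ring] at h
    rw [h, hs, hc]
  set x := Real.cos t + r * c with hx
  set y := Real.sin t + r * s with hy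
  have hden : (x + 1) ^ 2 + y ^ 2 = (2 * c + r) ^ 2 := by
    rw [hx, hy, hct, hst]; linear_combination (2 * c + r) ^ 2 * pyth
  have hnum : x ^ 2 + y ^ 2 - 1 = (2 * c + r) * r := by
    rw [hx, hy, hct, hst]; linear_combination (2 * c + r) ^ 2 * pyth
  have hdpos : (x + 1) ^ 2 + y ^ 2 ≠ 0 := by
    rw [hden]; positivity
  refine ⟨?_, ?_, ?_⟩
  · intro h
    have h1 : x = -1 := congrArg Prod.fst h
    have h2 : y = 0 := congrArg Prod.snd h
    apply hR
    have : (2 * c + r) ^ 2 = 0 := by rw [← hden, h1, h2]; ring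
    exact pow_eq_zero_iff (by norm_num) |>.mp this
  · rw [hnum, hden]
    field_simp
  · have hxp : x + 1 = c * (2 * c + r) := by
      rw [hx, hct]; ring
    have hyu : y = s * (2 * c + r) := by rw [hy, hst]; ring
    have h2 : 2 * (x + 1) * y / ((x + 1) ^ 2 + y ^ 2) = 2 * c * s := by
      rw [hden, hxp, hyu, div_eq_iff (pow_ne_zero 2 hR)]
      ring
    rw [h2, hyu]; ring

lemma polar_rep (x y : ℝ) (h : (x, y) ≠ ((-1 : ℝ), (0 : ℝ))) :
    ∃ θ R : ℝ, 0 ≤ θ ∧ θ < π ∧ R ≠ 0 ∧ x + 1 = R * Real.cos θ ∧ y = R * Real.sin θ := by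
  set z : ℂ := Complex.mk (x + 1) y with hz
  have hz0 : z ≠ 0 := by
    intro h0
    apply h
    have h1 : x + 1 = 0 := by rw [← Complex.zero_re, ← h0]
    have h2 : y = 0 := by rw [← Complex.zero_im, ← h0]
    have : x = -1 := by linarith
    rw [this, h2]
  have hρ : 0 < ‖z‖ := norm_pos_iff.mpr hz0
  have hre : ‖z‖ * Real.cos (Complex.arg z) = x + 1 := Complex.norm_mul_cos_arg z
  have him : ‖z‖ * Real.sin (Complex.arg z) = y := Complex.norm_mul_sin_arg z
  have harg := Complex.arg_mem_Ioc z
  obtain ⟨hgt, hle⟩ := harg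
  set a := Complex.arg z with ha
  rcases lt_trichotomy a 0 with hneg | hzero | hpos
  · refine ⟨a + π, -‖z‖, by linarith, by linarith, neg_ne_zero.mpr (ne_of_gt hρ), ?_, ?_⟩
    · rw [Real.cos_add_pi]; rw [← hre]; ring
    · rw [Real.sin_add_pi]; rw [← him]; ring
  · refine ⟨0, x + 1, le_refl 0, Real.pi_pos, ?_, by simp, ?_⟩
    · intro h0
      have hy0 : y = 0 := by rw [← him, hzero]; simp
      apply h
      have hx : x = -1 := by linarith
      rw [hx, hy0]
    · rw [← him, hzero]; simp
  · rcases lt_or_ge a π with hlt | hge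
    · exact ⟨a, ‖z‖, le_of_lt hpos, hlt, ne_of_gt hρ, hre.symm, him.symm⟩
    · have hapi : a = π := le_antisymm hle hge
      refine ⟨0, x + 1, le_refl 0, Real.pi_pos, ?_, by simp, ?_⟩
      · intro h0
        have hy0 : y = 0 := by rw [← him, hapi]; simp
        apply h
        have : x = -1 := by linarith
        rw [this, hy0]
      · rw [← him, hapi]; simp

lemma mobius_rep (x y : ℝ) (h : (x, y) ≠ ((-1 : ℝ), (0 : ℝ))) :
    ∃ t r : ℝ, 0 ≤ t ∧ t < 2 * π ∧ 2 * Real.cos (t / 2) + r ≠ 0 ∧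
      Real.cos t + r * Real.cos (t / 2) = x ∧ Real.sin t + r * Real.sin (t / 2) = y := by
  obtain ⟨θ, R, hθ0, hθπ, hR0, hxe, hye⟩ := polar_rep x y h
  have h2 : 2 * θ / 2 = θ := by ring
  have hct : Real.cos (2 * θ) = 2 * Real.cos θ ^ 2 - 1 := Real.cos_two_mul θ
  have hst : Real.sin (2 * θ) = 2 * Real.sin θ * Real.cos θ := Real.sin_two_mul θ
  refine ⟨2 * θ, R - 2 * Real.cos θ, by linarith, by linarith, ?_, ?_, ?_⟩
  · rw [h2]
    intro hh
    exact hR0 (by linarith)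
  · rw [h2, hct]; linear_combination -hxe
  · rw [h2, hst]; linear_combination -hye

theorem simple_mobius_eq_closure_graph (δ : ℝ) (hδ : 0 < δ)
    (w : ℝ × ℝ → ℝ × ℝ × ℝ)
    (hw : ∀ t r : ℝ, w (t, r) =
      (Real.cos t + r * Real.cos (t / 2),
       Real.sin t + r * Real.sin (t / 2),
       r * Real.sin (t / 2)))
    (P : Set (ℝ × ℝ)) (hP : P = Set.Ico 0 (2 * π) ×ˢ Set.Icc (-δ) δ)
    (f g : ℝ → ℝ → ℝ)
    (hf : ∀ x y : ℝ, f x y = y - 2 * (x + 1) * y / ((x + 1) ^ 2 + y ^ 2))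
    (hg : ∀ x y : ℝ, g x y = (x ^ 2 + y ^ 2 - 1) ^ 2 / ((x + 1) ^ 2 + y ^ 2))
    (S : Set (ℝ × ℝ))
    (hS : S = {p : ℝ × ℝ | p ≠ (-1, 0) ∧ g p.1 p.2 ≤ δ ^ 2}) :
    w '' P = closure {q : ℝ × ℝ × ℝ | ∃ p ∈ S, q = (p.1, p.2, f p.1 p.2)} := by
  have hwfun : w = fun p : ℝ × ℝ =>
      (Real.cos p.1 + p.2 * Real.cos (p.1 / 2),
       Real.sin p.1 + p.2 * Real.sin (p.1 / 2),
       p.2 * Real.sin (p.1 / 2)) := by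
    funext p
    rw [← hw p.1 p.2]
  have hwcont : Continuous w := by rw [hwfun]; fun_prop
  set G := {q : ℝ × ℝ × ℝ | ∃ p ∈ S, q = (p.1, p.2, f p.1 p.2)} with hG
  -- G ⊆ w '' P
  have hGsub : G ⊆ w '' P := by
    rintro q ⟨⟨px, py⟩, hpS, rfl⟩
    rw [hS] at hpS
    obtain ⟨hne, hgle⟩ := hpS
    obtain ⟨t, r, ht0, htlt, hR, hxe, hye⟩ := mobius_rep px py hne
    obtain ⟨-, hgv, hfv⟩ := mobius_key t r hR
    rw [hxe, hye] at hgv hfv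
    rw [hg] at hgle
    rw [hgv] at hgle
    have hrl : -δ ≤ r := by nlinarith
    have hru : r ≤ δ := by nlinarith
    refine ⟨(t, r), ?_, ?_⟩
    · rw [hP]; exact ⟨⟨ht0, htlt⟩, hrl, hru⟩
    · rw [hw t r, hf]
      simp only [Prod.mk.injEq]
      exact ⟨hxe, hye, hfv.symm⟩
  -- w '' P is closed
  have hclosed : IsClosed (w '' P) := by
    have himg : w '' P = w '' (Set.Icc 0 (2 * π) ×ˢ Set.Icc (-δ) δ) := by
      apply Subset.antisymm
      · apply Set.image_mono
        rw [hP]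
        exact Set.prod_mono_left Set.Ico_subset_Icc_self
      · rintro q ⟨⟨t, r⟩, ⟨ht, hr⟩, rfl⟩
        have ht1 : (0 : ℝ) ≤ t := ht.1
        have ht2' : t ≤ 2 * π := ht.2
        have hr1 : -δ ≤ r := hr.1
        have hr2 : r ≤ δ := hr.2
        rcases lt_or_ge t (2 * π) with hlt | hge
        · exact ⟨(t, r), by rw [hP]; exact ⟨⟨ht1, hlt⟩, hr1, hr2⟩, rfl⟩
        · have ht2 : t = 2 * π := le_antisymm ht2' hge
          refine ⟨(0, -r), by
            rw [hP]
            exact ⟨⟨le_refl 0, by positivity⟩, show -δ ≤ -r by linarith, show -r ≤ δ by linarith⟩, ?_⟩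
          rw [hw, hw, ht2, show 2 * π / 2 = π by ring]
          norm_num [Real.cos_pi, Real.sin_pi, Real.cos_two_pi, Real.sin_two_pi]
    rw [himg]
    exact ((isCompact_Icc.prod isCompact_Icc).image hwcont).isClosed
  apply Subset.antisymm
  · -- w '' P ⊆ closure G
    rintro q ⟨⟨t, r⟩, hpmem, rfl⟩
    rw [hP] at hpmem
    obtain ⟨⟨ht0, htlt⟩, hrl, hru⟩ := hpmem
    have hmemG : ∀ r' : ℝ, -δ ≤ r' → r' ≤ δ → 2 * Real.cos (t / 2) + r' ≠ 0 →
        w (t, r') ∈ G := by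
      intro r' h1 h2 hRne
      obtain ⟨hne, hgv, hfv⟩ := mobius_key t r' hRne
      refine ⟨(Real.cos t + r' * Real.cos (t / 2), Real.sin t + r' * Real.sin (t / 2)), ?_, ?_⟩
      · rw [hS]
        refine ⟨hne, ?_⟩
        dsimp only
        rw [hg, hgv]
        exact sq_le_sq' (by linarith) h2
      · dsimp only
        rw [hw t r', hf, hfv]
    by_cases hR : 2 * Real.cos (t / 2) + r = 0
    · set m : ℕ → ℝ := fun n => min δ ((n : ℝ) + 1)⁻¹ with hm
      have hmpos : ∀ n, 0 < m n := fun n => lt_min hδ (by positivity)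
      have hmle : ∀ n, m n ≤ δ := fun n => min_le_left _ _
      set ε : ℕ → ℝ := fun n => if 0 ≤ r then -(m n) else m n with hε
      have hεabs : ∀ n, |ε n| = m n := by
        intro n
        by_cases h0 : 0 ≤ r <;>
          simp [hε, h0, abs_of_pos (hmpos n)]
      have hεne : ∀ n, ε n ≠ 0 := by
        intro n hcon
        have := hεabs n
        rw [hcon] at this
        simp at this
        linarith [hmpos n]
      have hbound : ∀ n, -δ ≤ r + ε n ∧ r + ε n ≤ δ := by
        intro n
        by_cases h0 : 0 ≤ r
        · have he : ε n = -(m n) := by simp [hε, h0]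
          constructor <;> [linarith [hmle n]; linarith [hmpos n]]
        · push_neg at h0
          have he : ε n = m n := by simp [hε, not_le.mpr h0]
          constructor <;> [linarith [hmpos n]; linarith [hmle n]]
      have hRne : ∀ n, 2 * Real.cos (t / 2) + (r + ε n) ≠ 0 := by
        intro n hcon
        exact hεne n (by linarith)
      have hGn : ∀ n, w (t, r + ε n) ∈ G := fun n =>
        hmemG _ (hbound n).1 (hbound n).2 (hRne n)
      have hεlim : Filter.Tendsto ε Filter.atTop (nhds 0) := by
        apply squeeze_zero_norm (a := fun n : ℕ => ((n : ℝ) + 1)⁻¹)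
        · intro n
          rw [Real.norm_eq_abs, hεabs n]
          exact min_le_right _ _
        · exact tendsto_one_div_add_atTop_nhds_zero_nat.congr (fun n => one_div _)
      have hrlim : Filter.Tendsto (fun n => r + ε n) Filter.atTop (nhds r) := by
        simpa using tendsto_const_nhds.add hεlim
      have hwlim : Filter.Tendsto (fun n => w (t, r + ε n)) Filter.atTop (nhds (w (t, r))) := by
        exact (hwcont.tendsto _).comp (tendsto_const_nhds.prodMk_nhds hrlim)
      exact mem_closure_of_tendsto hwlim (Filter.Eventually.of_forall hGn)
    · exact subset_closure (hmemG r hrl hru hR)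
  · exact closure_minimal hGsub hclosed
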